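/- arXiv:0912.2039 — 3 statements merged into one kernel-verified Lean document; each statement's English description precedes it below -/
import Mathlib

section
/- Let X and Y be non-Archimedean n-normed spaces over 𝒦 and let f : X → Y be an n-isometry. Then f preserves 2-collinearity: if x₀, x₁, x₂ ∈ X are 2-collinear, then f(x₀), f(x₁), f(x₂) are 2-collinear in Y. -/
/-- A non-Archimedean valuation on a linearly ordered field `K`:
a map `v : K → ℝ` with `v r ≥ 0`, `v r = 0 ↔ r = 0`, multiplicativity and
the ultrametric inequality. -/
structure NAValuation (K : Type*) [Field K] [LinearOrder K] [IsStrictOrderedRing K] where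
  v : K → ℝ
  nonneg : ∀ r, 0 ≤ v r
  eq_zero_iff : ∀ r, v r = 0 ↔ r = 0
  map_mul : ∀ r s, v (r * s) = v r * v s
  ultra : ∀ r s, v (r + s) ≤ max (v r) (v s)

/-- `N` is a non-Archimedean `n`-norm on the `K`-vector space `X`
(relative to the non-Archimedean valuation `val` on `K`). -/
structure IsNANorm {K : Type*} [Field K] [LinearOrder K] [IsStrictOrderedRing K] (val : NAValuation K)
    (X : Type*) [AddCommGroup X] [Module K X] {n : ℕ}
    (N : (Fin n → X) → ℝ) : Prop where
  nonneg : ∀ x, 0 ≤ N x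
  eq_zero_iff : ∀ x, N x = 0 ↔ ¬ LinearIndependent K x
  perm : ∀ (x : Fin n → X) (σ : Equiv.Perm (Fin n)), N (x ∘ σ) = N x
  smul : ∀ (x : Fin n → X) (i : Fin n) (α : K) (y : X),
    N (Function.update x i (α • y)) = val.v α * N (Function.update x i y)
  add_le : ∀ (x : Fin n → X) (i : Fin n) (y z : X),
    N (Function.update x i (y + z)) ≤
      max (N (Function.update x i y)) (N (Function.update x i z))

/-- `f : X → Y` is an `n`-isometry with respect to the `n`-norms `NX`, `NY`. -/
def IsNIsometry (K : Type*) [Field K] [LinearOrder K] [IsStrictOrderedRing K] {X Y : Type*}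
    [AddCommGroup X] [Module K X] [AddCommGroup Y] [Module K Y] {n : ℕ}
    (NX : (Fin n → X) → ℝ) (NY : (Fin n → Y) → ℝ) (f : X → Y) : Prop :=
  ∀ (x₀ : X) (x : Fin n → X), NY (fun i => f (x i) - f x₀) = NX (fun i => x i - x₀)

/-- Three points `x₀, x₁, x₂` are 2-collinear if `x₁ - x₀` and `x₂ - x₀`
are linearly dependent. -/
def Collinear2 (K : Type*) [Field K] [LinearOrder K] [IsStrictOrderedRing K] {X : Type*}
    [AddCommGroup X] [Module K X] (x₀ x₁ x₂ : X) : Prop :=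
  ¬ LinearIndependent K ![x₁ - x₀, x₂ - x₀]

/-- `p` is an interior point of the triangle with vertices `x₀, x₁, x₂`. -/
def InteriorPoint (K : Type*) [Field K] [LinearOrder K] [IsStrictOrderedRing K] {X : Type*}
    [AddCommGroup X] [Module K X] (x₀ x₁ x₂ p : X) : Prop :=
  ∃ t₀ t₁ t₂ : K, t₀ + t₁ + t₂ = 1 ∧ 0 < t₀ ∧ 0 < t₁ ∧ 0 < t₂ ∧
    p = t₀ • x₀ + t₁ • x₁ + t₂ • x₂

/-- `f` is interior preserving: it maps interior points of a (nondegenerate)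
triangle to interior points of the image triangle. -/
def InteriorPreserving (K : Type*) [Field K] [LinearOrder K] [IsStrictOrderedRing K] {X Y : Type*}
    [AddCommGroup X] [Module K X] [AddCommGroup Y] [Module K Y] (f : X → Y) : Prop :=
  ∀ x₀ x₁ x₂ p : X, ¬ Collinear2 K x₀ x₁ x₂ → InteriorPoint K x₀ x₁ x₂ p →
    InteriorPoint K (f x₀) (f x₁) (f x₂) (f p)


section Aux

lemma exists_emb_eq {α : Type*} {n : ℕ} [NeZero n] (g : Fin n ↪ α) (a : α) :
    ∃ e : Fin n ↪ α, e 0 = a := by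
  by_cases h : ∃ k, g k = a
  · obtain ⟨k, hk⟩ := h
    exact ⟨(Equiv.swap 0 k).toEmbedding.trans g, by
      simp only [Function.Embedding.trans_apply, Equiv.coe_toEmbedding, Equiv.swap_apply_left]
      exact hk⟩
  · push_neg at h
    have hinj : Function.Injective (Function.update (⇑g) 0 a) := by
      intro i j hij
      rcases eq_or_ne i 0 with rfl | hi <;> rcases eq_or_ne j 0 with rfl | hj
      · rfl
      · rw [Function.update_self, Function.update_of_ne hj] at hij
        exact absurd hij.symm (h j)
      · rw [Function.update_self, Function.update_of_ne hi] at hij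
        exact absurd hij (h i)
      · rw [Function.update_of_ne hi, Function.update_of_ne hj] at hij
        exact g.injective hij
    exact ⟨⟨_, hinj⟩, Function.update_self 0 a ⇑g⟩

lemma exists_li_head {K : Type*} [Field K] {X : Type*} [AddCommGroup X] [Module K X]
    {n : ℕ} [NeZero n] (hrank : (n : Cardinal) ≤ Module.rank K X) {v : X} (hv : v ≠ 0) :
    ∃ c : Fin n → X, LinearIndependent K c ∧ c 0 = v := by
  have hs : LinearIndepOn K id ({v} : Set X) := LinearIndepOn.singleton hv
  have hcard : (n : Cardinal) ≤ Cardinal.mk ↥(hs.extend (Set.subset_univ _)) := by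
    rw [(Module.Basis.extend hs).mk_eq_rank'']
    exact hrank
  obtain ⟨s, hscard⟩ := Cardinal.exists_finset_le_card _ n hcard
  obtain ⟨t, -, htcard⟩ := Finset.exists_subset_card_eq hscard
  let g : Fin n ↪ ↥(hs.extend (Set.subset_univ _)) :=
    (Finset.equivFinOfCardEq htcard).symm.toEmbedding.trans (Function.Embedding.subtype _)
  have hmem : v ∈ hs.extend (Set.subset_univ _) := hs.subset_extend _ (Set.mem_singleton v)
  obtain ⟨e, he⟩ := exists_emb_eq g ⟨v, hmem⟩
  have hli : LinearIndependent K ((↑) : ↥(hs.extend (Set.subset_univ _)) → X) := by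
    have := (Module.Basis.extend hs).linearIndependent
    rwa [Module.Basis.coe_extend] at this
  exact ⟨fun i => (e i : X), hli.comp e e.injective, by simp [he]⟩

end Aux


lemma coeffs_of_update_dep {K : Type*} [Field K] {Y : Type*} [AddCommGroup Y] [Module K Y]
    {n : ℕ} {d : Fin n → Y} (hd : LinearIndependent K d) {w : Y} {j : Fin n}
    (hdep : ¬ LinearIndependent K (Function.update d j w)) :
    ∃ a : Fin n → K, a j = 0 ∧ ∑ i, a i • d i = w := by
  obtain ⟨g, hgsum, i0, hgi0⟩ := Fintype.not_linearIndependent_iff.mp hdep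
  have hfun : (fun i => g i • Function.update d j w i)
      = Function.update (fun i => g i • d i) j (g j • w) := by
    funext i
    rcases eq_or_ne i j with rfl | hij
    · simp
    · simp [Function.update_of_ne hij]
  rw [hfun, Finset.sum_update_of_mem (Finset.mem_univ j)] at hgsum
  have hupd : ∀ b : K, (fun i => Function.update g j b i • d i)
      = Function.update (fun i => g i • d i) j (b • d j) := by
    intro b; funext i
    rcases eq_or_ne i j with rfl | hij
    · simp
    · simp [Function.update_of_ne hij]
  have hgj : g j ≠ 0 := by
    intro hgj
    have hzero : ∑ i, Function.update g j 0 i • d i = 0 := by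
      rw [hupd, Finset.sum_update_of_mem (Finset.mem_univ j), zero_smul, zero_add]
      rw [hgj, zero_smul, zero_add] at hgsum
      exact hgsum
    have hall := Fintype.linearIndependent_iff.mp hd _ hzero
    rcases eq_or_ne i0 j with rfl | hi0
    · exact hgi0 hgj
    · have := hall i0
      rw [Function.update_of_ne hi0] at this
      exact hgi0 this
  refine ⟨fun i => -(g j)⁻¹ * Function.update g j 0 i, by simp, ?_⟩
  have hsum2 : ∑ i, Function.update g j 0 i • d i = -(g j • w) := by
    rw [hupd, Finset.sum_update_of_mem (Finset.mem_univ j), zero_smul, zero_add]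
    exact eq_neg_of_add_eq_zero_right hgsum
  calc ∑ i, (-(g j)⁻¹ * Function.update g j 0 i) • d i
      = ∑ i, -(g j)⁻¹ • (Function.update g j 0 i • d i) := by
        refine Finset.sum_congr rfl fun i _ => ?_
        rw [mul_smul]
    _ = -(g j)⁻¹ • ∑ i, Function.update g j 0 i • d i := (Finset.smul_sum).symm
    _ = -(g j)⁻¹ • -(g j • w) := by rw [hsum2]
    _ = w := by
        rw [← neg_smul, smul_smul, neg_mul_neg, inv_mul_cancel₀ hgj, one_smul]

lemma coeffs_unique {K : Type*} [Field K] {Y : Type*} [AddCommGroup Y] [Module K Y]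
    {n : ℕ} {d : Fin n → Y} (hd : LinearIndependent K d) {a b : Fin n → K}
    (h : ∑ i, a i • d i = ∑ i, b i • d i) : a = b := by
  have hzero : ∑ i, (a i - b i) • d i = 0 := by
    simp only [sub_smul, Finset.sum_sub_distrib, h, sub_self]
  have hall := Fintype.linearIndependent_iff.mp hd _ hzero
  funext i
  exact sub_eq_zero.mp (hall i)

/-- an `n`-isometry preserves 2-collinearity. -/
theorem nisometry_preserves_collinear2 {K : Type*} [Field K] [LinearOrder K] [IsStrictOrderedRing K]
    (val : NAValuation K) {X Y : Type*} [AddCommGroup X] [Module K X]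
    [AddCommGroup Y] [Module K Y] {n : ℕ} (hn : 2 ≤ n)
    (NX : (Fin n → X) → ℝ) (NY : (Fin n → Y) → ℝ)
    (hNX : IsNANorm val X NX) (hNY : IsNANorm val Y NY)
    (hdX : (n : Cardinal) ≤ Module.rank K X)
    (hdY : (n : Cardinal) ≤ Module.rank K Y)
    (f : X → Y) (hf : IsNIsometry K NX NY f)
    (x₀ x₁ x₂ : X) (h : Collinear2 K x₀ x₁ x₂) :
    Collinear2 K (f x₀) (f x₁) (f x₂) := by
  haveI : NeZero n := ⟨by omega⟩
  unfold Collinear2 at h ⊢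
  have key : ∀ (p : X) (x : Fin n → X),
      (LinearIndependent K fun i => f (x i) - f p) ↔ (LinearIndependent K fun i => x i - p) := by
    intro p x
    have e1 := hNY.eq_zero_iff (fun i => f (x i) - f p)
    have e2 := hNX.eq_zero_iff (fun i => x i - p)
    rw [hf p x] at e1
    exact not_iff_not.mp (e1.symm.trans e2)
  by_cases h1 : x₁ - x₀ = 0
  · intro hLI
    have hfx : f x₁ = f x₀ := by rw [sub_eq_zero.mp h1]
    exact hLI.ne_zero 0 (by simp [hfx])
  have hex : ¬ ∀ a : K, a • (x₁ - x₀) ≠ x₂ - x₀ :=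
    fun hall => h ((LinearIndependent.pair_iff' h1).mpr hall)
  push_neg at hex
  obtain ⟨t, ht⟩ := hex
  obtain ⟨c, hc, hc0⟩ := exists_li_head (K := K) hdX h1
  set d : Fin n → Y := fun i => f (x₀ + c i) - f x₀ with hd_def
  have hA : LinearIndependent K d := by
    exact (key x₀ (fun i => x₀ + c i)).mpr (by simpa using hc)
  have hx1 : x₀ + c 0 = x₁ := by rw [hc0]; abel
  have hd0 : d 0 = f x₁ - f x₀ := by simp only [hd_def]; rw [hx1]
  have hB : ∀ j : Fin n, j ≠ 0 →
      ∃ a : Fin n → K, a j = 0 ∧ ∑ i, a i • d i = f x₂ - f x₀ := by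
    intro j hj
    apply coeffs_of_update_dep hA
    intro hLI0
    have heq : Function.update d j (f x₂ - f x₀)
        = fun i => f (Function.update (fun i => x₀ + c i) j x₂ i) - f x₀ := by
      funext i
      rcases eq_or_ne i j with rfl | hij
      · simp
      · simp [Function.update_of_ne hij, hd_def]
    rw [heq] at hLI0
    have hLI := (key x₀ (Function.update (fun i => x₀ + c i) j x₂)).mp hLI0
    have hcd : (fun i => Function.update (fun i => x₀ + c i) j x₂ i - x₀)
        = Function.update c j (x₂ - x₀) := by
      funext i
      rcases eq_or_ne i j with rfl | hij
      · simp
      · simp [Function.update_of_ne hij]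
    rw [hcd] at hLI
    have hinj2 : Function.Injective (![0, j] : Fin 2 → Fin n) := by
      intro a b hab
      fin_cases a <;> fin_cases b <;> simp_all
    have h2 := hLI.comp ![0, j] hinj2
    have hcomp : Function.update c j (x₂ - x₀) ∘ ![0, j] = ![x₁ - x₀, x₂ - x₀] := by
      funext i
      fin_cases i
      · simp [Function.update_of_ne (Ne.symm hj), hc0]
      · simp
    rw [hcomp] at h2
    obtain ⟨-, habs⟩ := h2.eq_zero_of_pair (s := t) (t := -1)
      (by rw [neg_one_smul, ht]; abel)
    exact (by norm_num : (-1 : K) ≠ 0) habs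
  set j₁ : Fin n := ⟨1, by omega⟩ with hj₁def
  have hj₁ : j₁ ≠ 0 := by
    intro hcon
    have := congrArg Fin.val hcon
    simp [hj₁def] at this
  obtain ⟨a, haj₁, hasum⟩ := hB j₁ hj₁
  have hzero : ∀ j : Fin n, j ≠ 0 → a j = 0 := by
    intro j hj
    obtain ⟨b, hbj, hbsum⟩ := hB j hj
    rw [coeffs_unique hA (hasum.trans hbsum.symm)]
    exact hbj
  have hw : f x₂ - f x₀ = a 0 • d 0 := by
    rw [← hasum]
    exact Finset.sum_eq_single 0 (fun b _ hb => by rw [hzero b hb, zero_smul])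
      (fun hb => absurd (Finset.mem_univ 0) hb)
  intro hLI
  obtain ⟨-, habs⟩ := hLI.eq_zero_of_pair (s := a 0) (t := -1)
    (by rw [neg_one_smul, ← hd0, hw]; abel)
  exact (by norm_num : (-1 : K) ≠ 0) habs
end

section
/- Let X and Y be non-Archimedean n-normed spaces over 𝒦 and let f : X → Y be an n-isometry with f(0) = 0. Then the following conditions are equivalent: (i) f is additive, i.e. f(x₀+x₁) = f(x₀)+f(x₁) for all x₀, x₁ ∈ X; (ii) f preserves midpoints, i.e. f((x₀+x₁)/2) = (f(x₀)+f(x₁))/2 for all x₀, x₁ ∈ X with x₀ ≠ x₁; (iii) f preserves barycenters of triangles, i.e. f((x₀+x₁+x₂)/3) = (f(x₀)+f(x₁)+f(x₂))/3 for all x₀, x₁, x₂ ∈ X that are not 2-collinear. -/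
section Aux
variable {K : Type*} [Field K] [LinearOrder K] [IsStrictOrderedRing K] {X Y : Type*}
  [AddCommGroup X] [Module K X] [AddCommGroup Y] [Module K Y]

lemma pair_transform {u v : X} (h : LinearIndependent K ![u, v]) (a b c d : K)
    (hdet : a * d - b * c ≠ 0) :
    LinearIndependent K ![a • u + b • v, c • u + d • v] := by
  rw [LinearIndependent.pair_iff] at h ⊢
  intro s t hst
  have h1 : (s * a + t * c) • u + (s * b + t * d) • v = 0 := by
    rw [← hst]; module
  obtain ⟨h2, h3⟩ := h _ _ h1
  constructor
  · have : s * (a * d - b * c) = (s * a + t * c) * d - (s * b + t * d) * c := by ring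
    rw [h2, h3] at this
    simpa [hdet] using this
  · have : t * (a * d - b * c) = a * (s * b + t * d) - b * (s * a + t * c) := by ring
    rw [h2, h3] at this
    simpa [hdet] using this

lemma pair_transform' {u v u' v' : X} (h : LinearIndependent K ![u, v]) (a b c d : K)
    (hdet : a * d - b * c ≠ 0) (hu : u' = a • u + b • v) (hv : v' = c • u + d • v) :
    LinearIndependent K ![u', v'] := by
  rw [hu, hv]; exact pair_transform h a b c d hdet

/-- additivity from midpoint preservation -/
lemma add_of_mid (f : X → Y) (hf0 : f 0 = 0)
    (hm : ∀ x₀ x₁ : X, x₀ ≠ x₁ →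
      f ((2 : K)⁻¹ • (x₀ + x₁)) = (2 : K)⁻¹ • (f x₀ + f x₁)) :
    ∀ x₀ x₁ : X, f (x₀ + x₁) = f x₀ + f x₁ := by
  have h2 : (2 : K) ≠ 0 := by norm_num
  have hhalf : ∀ z : X, f ((2 : K)⁻¹ • z) = (2 : K)⁻¹ • f z := by
    intro z
    rcases eq_or_ne z 0 with hz | hz
    · simp [hz, hf0]
    · have := hm z 0 hz
      simpa [hf0] using this
  intro a b
  rcases eq_or_ne a b with hab | hab
  · subst hab
    rcases eq_or_ne a 0 with ha | ha
    · simp [ha, hf0]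
    · have key := hhalf (a + a)
      have harg : (2 : K)⁻¹ • (a + a) = a := by module
      rw [harg] at key
      rw [eq_comm, inv_smul_eq_iff₀ h2] at key
      rw [key]; module
  · have := hm a b hab
    rw [hhalf (a + b)] at this
    exact smul_right_injective Y (inv_ne_zero h2) this

/-- midpoint preservation from additivity -/
lemma mid_of_add (f : X → Y)
    (ha : ∀ x₀ x₁ : X, f (x₀ + x₁) = f x₀ + f x₁) :
    ∀ x₀ x₁ : X, f ((2 : K)⁻¹ • (x₀ + x₁)) = (2 : K)⁻¹ • (f x₀ + f x₁) := by
  have h2 : (2 : K) ≠ 0 := by norm_num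
  intro x y
  set w := (2 : K)⁻¹ • (x + y) with hw
  have hww : w + w = x + y := by rw [hw]; module
  have : f x + f y = (2 : K) • f w := by
    rw [← ha x y, ← hww, ha w w, two_smul]
  rw [← inv_smul_eq_iff₀ h2] at this
  exact this.symm

/-- barycenter preservation from additivity -/
lemma bar_of_add (f : X → Y)
    (ha : ∀ x₀ x₁ : X, f (x₀ + x₁) = f x₀ + f x₁) :
    ∀ x₀ x₁ x₂ : X, f ((3 : K)⁻¹ • (x₀ + x₁ + x₂)) = (3 : K)⁻¹ • (f x₀ + f x₁ + f x₂) := by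
  have h3 : (3 : K) ≠ 0 := by norm_num
  intro x y z
  set w := (3 : K)⁻¹ • (x + y + z) with hw
  have hww : w + w + w = x + y + z := by rw [hw]; module
  have : f x + f y + f z = (3 : K) • f w := by
    rw [← ha x y, ← ha (x + y) z, ← hww, ha (w + w) w, ha w w]
    module
  rw [← inv_smul_eq_iff₀ h3] at this
  exact this.symm

end Aux

section Bar
variable {K : Type*} [Field K] [LinearOrder K] [IsStrictOrderedRing K] {X Y : Type*}
  [AddCommGroup X] [Module K X] [AddCommGroup Y] [Module K Y]

/-- additivity from barycenter preservation -/
lemma add_of_bar (f : X → Y) (hf0 : f 0 = 0) (hrank : 1 < Module.rank K X)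
    (hb : ∀ x₀ x₁ x₂ : X, ¬ Collinear2 K x₀ x₁ x₂ →
      f ((3 : K)⁻¹ • (x₀ + x₁ + x₂)) = (3 : K)⁻¹ • (f x₀ + f x₁ + f x₂)) :
    ∀ x₀ x₁ : X, f (x₀ + x₁) = f x₀ + f x₁ := by
  have h3 : (3 : K) ≠ 0 := by norm_num
  have hpair : ∀ x : X, x ≠ 0 → ∃ y, LinearIndependent K ![x, y] :=
    fun x hx => exists_linearIndependent_pair_of_one_lt_rank hrank hx
  have hb' : ∀ x₀ x₁ x₂ : X, LinearIndependent K ![x₁ - x₀, x₂ - x₀] →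
      f ((3 : K)⁻¹ • (x₀ + x₁ + x₂)) = (3 : K)⁻¹ • (f x₀ + f x₁ + f x₂) :=
    fun x₀ x₁ x₂ h => hb x₀ x₁ x₂ (fun hc => hc h)
  have hsnd : ∀ z y : X, LinearIndependent K ![z, y] → y ≠ 0 := by
    intro z y h
    have := linearIndependent_fin2.mp h
    simpa using this.1
  have hswap : ∀ z y : X, LinearIndependent K ![z, y] → LinearIndependent K ![y, z] :=
    fun z y h => pair_transform' h 0 1 1 0 (by norm_num) (by module) (by module)
  have R : ∀ z y : X, LinearIndependent K ![z, y] →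
      f ((3 : K)⁻¹ • z) = (3 : K)⁻¹ • (f y + f (-y) + f z) := by
    intro z y h
    have hLI : LinearIndependent K ![(-y) - y, z - y] :=
      pair_transform' h 0 (-2) 1 (-1) (by norm_num) (by module) (by module)
    have hres := hb' y (-y) z hLI
    have harg : y + -y + z = z := by abel
    rwa [harg] at hres
  have hs : ∀ z y y' : X, LinearIndependent K ![z, y] → LinearIndependent K ![z, y'] →
      f y + f (-y) = f y' + f (-y') := by
    intro z y y' h h'
    have e := (R z y h).symm.trans (R z y' h')
    have e2 := smul_right_injective Y (inv_ne_zero h3) e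
    exact add_right_cancel e2
  have hdep : ∀ y y' : X, y ≠ 0 → y' ≠ 0 → f y + f (-y) = f y' + f (-y') := by
    intro y y' hy hy'
    by_cases h : LinearIndependent K ![y, y']
    · exact hs (y + y') y y'
        (pair_transform' h 1 1 1 0 (by norm_num) (by module) (by module))
        (pair_transform' h 1 1 0 1 (by norm_num) (by module) (by module))
    · rw [linearIndependent_fin2] at h
      push_neg at h
      simp only [Matrix.cons_val_one, Matrix.head_cons, Matrix.cons_val_zero] at h
      obtain ⟨t, ht⟩ := h hy'
      have ht0 : t ≠ 0 := by
        rintro rfl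
        rw [zero_smul] at ht
        exact hy ht.symm
      obtain ⟨z, hz⟩ := hpair y hy
      have hzy : LinearIndependent K ![z, y] := hswap y z hz
      have hzy' : LinearIndependent K ![z, y'] := by
        refine pair_transform' hzy 1 0 0 t⁻¹ (by simpa using inv_ne_zero ht0)
          (by module) ?_
        rw [zero_smul, zero_add, eq_inv_smul_iff₀ ht0]
        exact ht
      exact hs z y y' hzy hzy'
  obtain ⟨e, he⟩ := rank_pos_iff_exists_ne_zero.mp (lt_trans zero_lt_one hrank)
  set c := f e + f (-e) with hc
  have hc1 : ∀ y : X, y ≠ 0 → f y + f (-y) = c := fun y hy => hdep y e hy he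
  have hE1 : ∀ z : X, z ≠ 0 → f ((3 : K)⁻¹ • z) = (3 : K)⁻¹ • (f z + c) := by
    intro z hz
    obtain ⟨y, hy⟩ := hpair z hz
    rw [R z y hy, hc1 y (hsnd z y hy), add_comm]
  have hE2 : ∀ w : X, w ≠ 0 → f ((3 : K) • w) = (3 : K) • f w - c := by
    intro w hw
    have h3w : (3 : K) • w ≠ 0 := smul_ne_zero h3 hw
    have e1 := hE1 _ h3w
    rw [inv_smul_smul₀ h3] at e1
    exact eq_sub_of_add_eq ((inv_smul_eq_iff₀ h3).mp e1.symm)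
  -- prove c = 0 using one independent pair
  have hcc : c = 0 := by
    obtain ⟨y₀, hLI⟩ := hpair e he
    have hy0 : y₀ ≠ 0 := hsnd _ _ hLI
    have hxy0 : e + y₀ ≠ 0 := by
      intro hsum
      have h11 : (1 : K) • e + (1 : K) • y₀ = 0 := by rw [one_smul, one_smul]; exact hsum
      exact one_ne_zero (LinearIndependent.pair_iff.mp hLI 1 1 h11).1
    have hLI3 : LinearIndependent K ![(3:K)•y₀ - (3:K)•e, (0:X) - (3:K)•e] :=
      pair_transform' hLI (-3) 3 (-3) 0 (by norm_num) (by module) (by module)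
    have E3 := hb' ((3:K)•e) ((3:K)•y₀) 0 hLI3
    rw [show (3:K)⁻¹ • ((3:K)•e + (3:K)•y₀ + 0) = e + y₀ from by module, hf0, add_zero,
      hE2 e he, hE2 y₀ hy0] at E3
    have hLI9 : LinearIndependent K ![(9:K)•y₀ - (9:K)•e, (0:X) - (9:K)•e] :=
      pair_transform' hLI (-9) 9 (-9) 0 (by norm_num) (by module) (by module)
    have E9 := hb' ((9:K)•e) ((9:K)•y₀) 0 hLI9
    rw [show (3:K)⁻¹ • ((9:K)•e + (9:K)•y₀ + 0) = (3:K) • (e + y₀) from by module, hf0,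
      add_zero, show (9:K)•e = (3:K)•((3:K)•e) from by module,
      show (9:K)•y₀ = (3:K)•((3:K)•y₀) from by module,
      hE2 ((3:K)•e) (smul_ne_zero h3 he), hE2 ((3:K)•y₀) (smul_ne_zero h3 hy0),
      hE2 e he, hE2 y₀ hy0, hE2 (e + y₀) hxy0, E3] at E9
    -- E9 : 3•(3⁻¹•((3•fe - c) + (3•fy₀ - c))) - c = 3⁻¹•((3•(3•fe - c) - c) + (3•(3•fy₀ - c) - c))
    have h6 : (3:K)⁻¹ • c =
        ((3:K)⁻¹ • (((3:K) • ((3:K) • f e - c) - c) + ((3:K) • ((3:K) • f y₀ - c) - c))) -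
        ((3:K) • ((3:K)⁻¹ • (((3:K) • f e - c) + ((3:K) • f y₀ - c))) - c) := by
      module
    rw [← E9, sub_self] at h6
    exact (smul_eq_zero.mp h6).resolve_left (inv_ne_zero h3)
  have hneg : ∀ y : X, f (-y) = - f y := by
    intro y
    rcases eq_or_ne y 0 with rfl | hy
    · simp [hf0]
    · have := hc1 y hy
      rw [hcc] at this
      exact eq_neg_of_add_eq_zero_right this
  have hE2' : ∀ w : X, f ((3 : K) • w) = (3 : K) • f w := by
    intro w
    rcases eq_or_ne w 0 with rfl | hw
    · simp [hf0]
    · rw [hE2 w hw, hcc, sub_zero]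
  have hadd_ind : ∀ a b : X, LinearIndependent K ![a, b] → f (a + b) = f a + f b := by
    intro a b h
    have hLI3 : LinearIndependent K ![(3:K)•b - (3:K)•a, (0:X) - (3:K)•a] :=
      pair_transform' h (-3) 3 (-3) 0 (by norm_num) (by module) (by module)
    have E := hb' ((3:K)•a) ((3:K)•b) 0 hLI3
    rw [show (3:K)⁻¹ • ((3:K)•a + (3:K)•b + 0) = a + b from by module, hf0, add_zero,
      hE2' a, hE2' b] at E
    rw [E]; module
  intro a b
  rcases eq_or_ne a 0 with rfl | ha
  · simp [hf0]
  rcases eq_or_ne b 0 with rfl | hb0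
  · simp [hf0]
  by_cases h : LinearIndependent K ![a, b]
  · exact hadd_ind a b h
  · rw [linearIndependent_fin2] at h
    push_neg at h
    simp only [Matrix.cons_val_one, Matrix.head_cons, Matrix.cons_val_zero] at h
    obtain ⟨t, ht⟩ := h hb0
    have ht0 : t ≠ 0 := by
      rintro rfl
      rw [zero_smul] at ht
      exact ha ht.symm
    subst ht
    rcases eq_or_ne t (-1) with rfl | htne
    · rw [show (-1:K)•b + b = (0:X) from by module, hf0,
        show (-1:K)•b = -b from by module, hneg b]
      abel
    · obtain ⟨y, hy⟩ := hpair b hb0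
      have l1 : LinearIndependent K ![b + y, t•b - y] :=
        pair_transform' hy 1 1 t (-1)
          (by intro hcon; apply htne; linarith) (by module) (by module)
      have l2 : LinearIndependent K ![t•b, -y] :=
        pair_transform' hy t 0 0 (-1) (by simpa using ht0) (by module) (by module)
      have step : f (t•b + b) = f (b + y) + f (t•b - y) := by
        rw [show t•b + b = (b + y) + (t•b - y) from by module]
        exact hadd_ind _ _ l1
      rw [step, hadd_ind b y hy, show t•b - y = t•b + (-y) from sub_eq_add_neg _ _,
        hadd_ind _ _ l2, hneg y]
      abel

end Bar

/-- for an `n`-isometry `f` with `f 0 = 0`, additivity,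
midpoint preservation, and barycenter preservation are equivalent. -/
theorem nisometry_additive_iff_midpoint_iff_barycenter {K : Type*}
    [Field K] [LinearOrder K] [IsStrictOrderedRing K] (val : NAValuation K) {X Y : Type*}
    [AddCommGroup X] [Module K X] [AddCommGroup Y] [Module K Y] {n : ℕ}
    (hn : 2 ≤ n) (NX : (Fin n → X) → ℝ) (NY : (Fin n → Y) → ℝ)
    (hNX : IsNANorm val X NX) (hNY : IsNANorm val Y NY)
    (hdX : (n : Cardinal) ≤ Module.rank K X)
    (hdY : (n : Cardinal) ≤ Module.rank K Y)
    (f : X → Y) (hf : IsNIsometry K NX NY f) (hf0 : f 0 = 0) :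
    ((∀ x₀ x₁ : X, f (x₀ + x₁) = f x₀ + f x₁) ↔
      (∀ x₀ x₁ : X, x₀ ≠ x₁ →
        f ((2 : K)⁻¹ • (x₀ + x₁)) = (2 : K)⁻¹ • (f x₀ + f x₁))) ∧
    ((∀ x₀ x₁ : X, x₀ ≠ x₁ →
        f ((2 : K)⁻¹ • (x₀ + x₁)) = (2 : K)⁻¹ • (f x₀ + f x₁)) ↔
      (∀ x₀ x₁ x₂ : X, ¬ Collinear2 K x₀ x₁ x₂ →
        f ((3 : K)⁻¹ • (x₀ + x₁ + x₂)) = (3 : K)⁻¹ • (f x₀ + f x₁ + f x₂))) := by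
  have hrank : 1 < Module.rank K X := by
    have h2n : ((2 : ℕ) : Cardinal) ≤ (n : Cardinal) := Nat.cast_le.mpr hn
    have hle : ((2 : ℕ) : Cardinal) ≤ Module.rank K X := le_trans h2n hdX
    have h12 : (1 : Cardinal) < ((2 : ℕ) : Cardinal) := by norm_num
    exact lt_of_lt_of_le h12 hle
  constructor
  · constructor
    · intro hadd
      exact fun x₀ x₁ _ => mid_of_add f hadd x₀ x₁
    · intro hmid
      exact add_of_mid f hf0 hmid
  · constructor
    · intro hmid x₀ x₁ x₂ _
      exact bar_of_add f (add_of_mid f hf0 hmid) x₀ x₁ x₂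
    · intro hbar
      have hadd := add_of_bar f hf0 hrank hbar
      exact fun x₀ x₁ _ => mid_of_add f hadd x₀ x₁
end

section
/- Let X and Y be (real) linear n-normed spaces and let f : X → Y be an n-isometry with f(0) = 0. Then the following conditions are equivalent: (i) f is additive, i.e. f(x₀+x₁) = f(x₀)+f(x₁) for all x₀, x₁ ∈ X; (ii) f preserves midpoints, i.e. f((x₀+x₁)/2) = (f(x₀)+f(x₁))/2 for all x₀, x₁ ∈ X with x₀ ≠ x₁; (iii) f preserves barycenters of triangles, i.e. f((x₀+x₁+x₂)/3) = (f(x₀)+f(x₁)+f(x₂))/3 for all x₀, x₁, x₂ ∈ X that are not 2-collinear. -/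
/-- `N` is a (real) linear `n`-norm on the real vector space `X`. -/
structure IsLinearNNorm (X : Type*) [AddCommGroup X] [Module ℝ X] {n : ℕ}
    (N : (Fin n → X) → ℝ) : Prop where
  nonneg : ∀ x, 0 ≤ N x
  eq_zero_iff : ∀ x, N x = 0 ↔ ¬ LinearIndependent ℝ x
  perm : ∀ (x : Fin n → X) (σ : Equiv.Perm (Fin n)), N (x ∘ σ) = N x
  smul : ∀ (x : Fin n → X) (i : Fin n) (α : ℝ) (y : X),
    N (Function.update x i (α • y)) = |α| * N (Function.update x i y)
  add_le : ∀ (x : Fin n → X) (i : Fin n) (y z : X),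
    N (Function.update x i (y + z)) ≤
      N (Function.update x i y) + N (Function.update x i z)

/-- `f : X → Y` is an `n`-isometry with respect to the `n`-norms `NX`, `NY`. -/
def IsNIsometryReal {X Y : Type*} [AddCommGroup X] [Module ℝ X]
    [AddCommGroup Y] [Module ℝ Y] {n : ℕ}
    (NX : (Fin n → X) → ℝ) (NY : (Fin n → Y) → ℝ) (f : X → Y) : Prop :=
  ∀ (x₀ : X) (x : Fin n → X), NY (fun i => f (x i) - f x₀) = NX (fun i => x i - x₀)

/-- Three points `x₀, x₁, x₂` are 2-collinear if `x₁ - x₀` and `x₂ - x₀`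
are linearly dependent. -/
def Collinear2Real {X : Type*} [AddCommGroup X] [Module ℝ X]
    (x₀ x₁ x₂ : X) : Prop :=
  ¬ LinearIndependent ℝ ![x₁ - x₀, x₂ - x₀]

section AuxNIso

variable {X Y : Type*} [AddCommGroup X] [Module ℝ X] [AddCommGroup Y] [Module ℝ Y]

private lemma indep_of_eq {x y v w : X} (h : LinearIndependent ℝ ![x, y])
    (p q r s : ℝ) (hdet : p * s - q * r ≠ 0)
    (hv : v = p • x + q • y) (hw : w = r • x + s • y) :
    LinearIndependent ℝ ![v, w] := by
  rw [LinearIndependent.pair_iff] at h ⊢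
  intro c d hcd
  have h0 : (c * p + d * r) • x + (c * q + d * s) • y = 0 := by
    have e : (c * p + d * r) • x + (c * q + d * s) • y = c • v + d • w := by
      rw [hv, hw]; module
    rw [e, hcd]
  obtain ⟨h1, h2⟩ := h _ _ h0
  constructor
  · have hc : c * (p * s - q * r) = 0 := by linear_combination s * h1 - r * h2
    rcases mul_eq_zero.mp hc with h' | h'
    · exact h'
    · exact absurd h' hdet
  · have hd : d * (p * s - q * r) = 0 := by linear_combination p * h2 - q * h1
    rcases mul_eq_zero.mp hd with h' | h'
    · exact h'
    · exact absurd h' hdet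

private lemma exists_indep_partner {n : ℕ} (hn : 2 ≤ n)
    (hdX : (n : Cardinal) ≤ Module.rank ℝ X) (x : X) (hx : x ≠ 0) :
    ∃ y, LinearIndependent ℝ ![x, y] := by
  have hy : ∃ y, y ∉ Submodule.span ℝ ({x} : Set X) := by
    by_contra h
    push_neg at h
    have htop : Submodule.span ℝ ({x} : Set X) = ⊤ := by
      rw [eq_top_iff]; intro z _; exact h z
    have h1 : Module.rank ℝ X ≤ 1 := by
      calc Module.rank ℝ X = Module.rank ℝ (⊤ : Submodule ℝ X) := (rank_top ℝ X).symm
        _ = Module.rank ℝ (Submodule.span ℝ ({x} : Set X)) := by rw [htop]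
        _ ≤ Cardinal.mk ({x} : Set X) := rank_span_le ({x} : Set X)
        _ = 1 := Cardinal.mk_singleton x
    have h2 : (2 : Cardinal) ≤ Module.rank ℝ X := by
      refine le_trans ?_ hdX
      exact_mod_cast Nat.cast_le.mpr hn
    have h3 := h2.trans h1
    norm_num at h3
  obtain ⟨y, hy⟩ := hy
  refine ⟨y, ?_⟩
  rw [LinearIndependent.pair_iff]
  intro s t hst
  by_cases ht : t = 0
  · subst ht
    rw [zero_smul, add_zero] at hst
    rcases smul_eq_zero.mp hst with h' | h'
    · exact ⟨h', rfl⟩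
    · exact absurd h' hx
  · exfalso
    apply hy
    have h2 : t • y = (-s) • x := by
      rw [neg_smul]
      exact eq_neg_of_add_eq_zero_right hst
    have hyx : y = (t⁻¹ * (-s)) • x := by
      calc y = t⁻¹ • (t • y) := (inv_smul_smul₀ ht y).symm
        _ = t⁻¹ • ((-s) • x) := by rw [h2]
        _ = (t⁻¹ * (-s)) • x := by rw [smul_smul]
    rw [hyx]
    exact Submodule.smul_mem _ _ (Submodule.mem_span_singleton_self x)

private lemma additive_of_barycenter {n : ℕ} (hn : 2 ≤ n)
    (hdX : (n : Cardinal) ≤ Module.rank ℝ X)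
    (f : X → Y) (hf0 : f 0 = 0)
    (hbar : ∀ x₀ x₁ x₂ : X, ¬ Collinear2Real x₀ x₁ x₂ →
      f ((3 : ℝ)⁻¹ • (x₀ + x₁ + x₂)) = (3 : ℝ)⁻¹ • (f x₀ + f x₁ + f x₂)) :
    ∀ x y : X, f (x + y) = f x + f y := by
  have sum0 : ∀ a b c : X, a + b + c = 0 → LinearIndependent ℝ ![b - a, c - a] →
      f a + f b + f c = 0 := by
    intro a b c habc hind
    have h := hbar a b c (fun hc => hc hind)
    rw [habc, smul_zero, hf0] at h
    rcases smul_eq_zero.mp h.symm with h' | h'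
    · norm_num at h'
    · exact h'
  have key : ∀ x y : X, LinearIndependent ℝ ![x, y] →
      f x + f y + f (-x - y) = 0 := by
    intro x y h
    refine sum0 x y (-x - y) (by abel) ?_
    exact indep_of_eq h (-1) 1 (-2) (-1) (by norm_num) (by module) (by module)
  have keyneg : ∀ x y : X, LinearIndependent ℝ ![x, y] →
      f (-x) + f (-y) + f (x + y) = 0 := by
    intro x y h
    have h' : LinearIndependent ℝ ![-x, -y] :=
      indep_of_eq h (-1) 0 0 (-1) (by norm_num) (by module) (by module)
    have k := key (-x) (-y) h'
    have e : -(-x) - -y = x + y := by abel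
    rwa [e] at k
  have R1 : ∀ x y : X, LinearIndependent ℝ ![x, y] →
      (f x + f (-x)) + (f y + f (-y)) + (f (x + y) + f (-(x + y))) = 0 := by
    intro x y h
    have k1 := key x y h
    have e : -x - y = -(x + y) := by abel
    rw [e] at k1
    have k2 := keyneg x y h
    have comb : (f x + f (-x)) + (f y + f (-y)) + (f (x + y) + f (-(x + y))) =
        (f x + f y + f (-(x + y))) + (f (-x) + f (-y) + f (x + y)) := by abel
    rw [comb, k1, k2, add_zero]
  have R : ∀ x y : X, LinearIndependent ℝ ![x, y] →
      (f (y + y) + f (-(y + y))) + ((f x + f (-x)) + (f x + f (-x))) = 0 := by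
    intro x y h
    have h1 := R1 x y h
    have hxyy : LinearIndependent ℝ ![x + y, y] :=
      indep_of_eq h 1 1 0 1 (by norm_num) (by module) (by module)
    have h2 := R1 (x + y) y hxyy
    have e : x + y + y = x + (y + y) := by abel
    rw [e] at h2
    have hxy2 : LinearIndependent ℝ ![x, y + y] :=
      indep_of_eq h 1 0 0 2 (by norm_num) (by module) (by module)
    have h3 := R1 x (y + y) hxy2
    have comb : (f (y + y) + f (-(y + y))) + ((f x + f (-x)) + (f x + f (-x))) =
        ((f x + f (-x)) + (f (y + y) + f (-(y + y))) + (f (x + (y + y)) + f (-(x + (y + y)))))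
        + ((f x + f (-x)) + (f y + f (-y)) + (f (x + y) + f (-(x + y))))
        - ((f (x + y) + f (-(x + y))) + (f y + f (-y)) + (f (x + (y + y)) + f (-(x + (y + y)))))
        := by abel
    rw [comb, h1, h2, h3]
    simp
  have cancel2 : ∀ u v : Y, u + u = v + v → u = v := by
    intro u v huv
    have h2 : (2 : ℝ) • u = (2 : ℝ) • v := by
      rw [two_smul, two_smul]; exact huv
    exact smul_right_injective Y (by norm_num : (2:ℝ) ≠ 0) h2
  have odd : ∀ x : X, f (-x) = - f x := by
    intro x
    by_cases hx : x = 0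
    · simp [hx, hf0]
    obtain ⟨b, hb⟩ := exists_indep_partner hn hdX x hx
    have hba : LinearIndependent ℝ ![b, x] :=
      indep_of_eq hb 0 1 1 0 (by norm_num) (by module) (by module)
    have h1 := R x b hb
    have h3 := R b x hba
    have hxxb : LinearIndependent ℝ ![x + x, b] :=
      indep_of_eq hb 2 0 0 1 (by norm_num) (by module) (by module)
    have h4 := R (x + x) b hxxb
    have hbbx : LinearIndependent ℝ ![b + b, x] :=
      indep_of_eq hba 2 0 0 1 (by norm_num) (by module) (by module)
    have h2 := R (b + b) x hbbx
    have e1 : f x + f (-x) = f (x + x) + f (-(x + x)) := by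
      apply cancel2
      have comb : ((f x + f (-x)) + (f x + f (-x)))
          - ((f (x + x) + f (-(x + x))) + (f (x + x) + f (-(x + x)))) =
          ((f (b + b) + f (-(b + b))) + ((f x + f (-x)) + (f x + f (-x))))
          - ((f (b + b) + f (-(b + b))) + ((f (x + x) + f (-(x + x))) + (f (x + x) + f (-(x + x)))))
          := by abel
      rw [h1, h4, sub_zero] at comb
      exact sub_eq_zero.mp comb
    have e2 : f b + f (-b) = f (b + b) + f (-(b + b)) := by
      apply cancel2
      have comb : ((f b + f (-b)) + (f b + f (-b)))
          - ((f (b + b) + f (-(b + b))) + (f (b + b) + f (-(b + b)))) =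
          ((f (x + x) + f (-(x + x))) + ((f b + f (-b)) + (f b + f (-b))))
          - ((f (x + x) + f (-(x + x))) + ((f (b + b) + f (-(b + b))) + (f (b + b) + f (-(b + b)))))
          := by abel
      rw [h3, h2, sub_zero] at comb
      exact sub_eq_zero.mp comb
    rw [← e2] at h1
    rw [← e1] at h3
    -- h1 : (f b + f (-b)) + ((f x + f (-x)) + (f x + f (-x))) = 0
    -- h3 : (f x + f (-x)) + ((f b + f (-b)) + (f b + f (-b))) = 0
    have hGx : (f x + f (-x)) + (f x + f (-x)) + (f x + f (-x)) = 0 := by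
      have comb : (f x + f (-x)) + (f x + f (-x)) + (f x + f (-x)) =
          ((f b + f (-b)) + ((f x + f (-x)) + (f x + f (-x))))
          + ((f b + f (-b)) + ((f x + f (-x)) + (f x + f (-x))))
          - ((f x + f (-x)) + ((f b + f (-b)) + (f b + f (-b)))) := by abel
      rw [comb, h1, h3]
      simp
    have hzero : f x + f (-x) = 0 := by
      have h30 : (3 : ℝ) • (f x + f (-x)) =
          (f x + f (-x)) + (f x + f (-x)) + (f x + f (-x)) := by module
      have h31 : (3 : ℝ) • (f x + f (-x)) = 0 := by rw [h30]; exact hGx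
      rcases smul_eq_zero.mp h31 with h' | h'
      · norm_num at h'
      · exact h'
    exact eq_neg_of_add_eq_zero_left (by rw [add_comm]; exact hzero)
  have pairadd : ∀ x y : X, LinearIndependent ℝ ![x, y] →
      f (x + y) = f x + f y := by
    intro x y h
    have k := key x y h
    have e : -x - y = -(x + y) := by abel
    rw [e, odd (x + y)] at k
    have k' : f x + f y - f (x + y) = 0 := by rw [sub_eq_add_neg]; exact k
    exact (sub_eq_zero.mp k').symm
  intro u v
  by_cases hu : u = 0
  · simp [hu, hf0]
  by_cases hv : v = 0
  · simp [hv, hf0]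
  by_cases hind : LinearIndependent ℝ ![u, v]
  · exact pairadd u v hind
  · have hdep : ∃ t : ℝ, v = t • u := by
      rw [LinearIndependent.pair_iff] at hind
      push_neg at hind
      obtain ⟨s, t, hst, hne⟩ := hind
      by_cases ht : t = 0
      · exfalso
        subst ht
        rw [zero_smul, add_zero] at hst
        rcases smul_eq_zero.mp hst with h' | h'
        · exact hne h' rfl
        · exact hu h'
      · refine ⟨t⁻¹ * (-s), ?_⟩
        have h2 : t • v = (-s) • u := by
          rw [neg_smul]
          exact eq_neg_of_add_eq_zero_right hst
        calc v = t⁻¹ • (t • v) := (inv_smul_smul₀ ht v).symm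
          _ = t⁻¹ • ((-s) • u) := by rw [h2]
          _ = (t⁻¹ * (-s)) • u := by rw [smul_smul]
    obtain ⟨t, rfl⟩ := hdep
    have ht0 : t ≠ 0 := by
      intro h0
      exact hv (by rw [h0, zero_smul])
    obtain ⟨b, hb⟩ := exists_indep_partner hn hdX u hu
    have hub : LinearIndependent ℝ ![t • u, b] :=
      indep_of_eq hb t 0 0 1 (by simpa using ht0) (by module) (by module)
    have i1 : LinearIndependent ℝ ![u, t • u + b] :=
      indep_of_eq hb 1 0 t 1 (by norm_num) (by module) (by module)
    have a1 : f (u + (t • u + b)) = f u + f (t • u + b) := pairadd _ _ i1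
    have a2 : f (t • u + b) = f (t • u) + f b := pairadd _ _ hub
    by_cases hs : u + t • u = 0
    · rw [hs, hf0]
      have hneg : t • u = -u := eq_neg_of_add_eq_zero_right hs
      rw [hneg, odd u]
      simp
    · have h1t : (1 + t) ≠ 0 := by
        intro h0
        apply hs
        have e : u + t • u = (1 + t) • u := by module
        rw [e, h0, zero_smul]
      have i2 : LinearIndependent ℝ ![u + t • u, b] :=
        indep_of_eq hb (1 + t) 0 0 1 (by simpa using h1t) (by module) (by module)
      have a3 : f (u + t • u + b) = f (u + t • u) + f b := pairadd _ _ i2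
      have e : u + (t • u + b) = u + t • u + b := by abel
      rw [e, a3, a2] at a1
      have a1' : f (u + t • u) + f b = (f u + f (t • u)) + f b := by
        rw [a1]; abel
      exact add_right_cancel a1'

private lemma additive_of_midpoint (f : X → Y) (hf0 : f 0 = 0)
    (hmid : ∀ x₀ x₁ : X, x₀ ≠ x₁ →
      f ((2 : ℝ)⁻¹ • (x₀ + x₁)) = (2 : ℝ)⁻¹ • (f x₀ + f x₁)) :
    ∀ x y : X, f (x + y) = f x + f y := by
  have double_ne : ∀ x : X, x ≠ 0 → x + x ≠ 0 := by
    intro x hx h0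
    apply hx
    have h2 : (2 : ℝ) • x = 0 := by rw [two_smul]; exact h0
    rcases smul_eq_zero.mp h2 with h' | h'
    · norm_num at h'
    · exact h'
  have odd : ∀ x : X, f (-x) = - f x := by
    intro x
    by_cases hx : x = 0
    · simp [hx, hf0]
    have hne : x ≠ -x := by
      intro h
      apply double_ne x hx
      nth_rewrite 2 [h]
      simp
    have h := hmid x (-x) hne
    have e : (2 : ℝ)⁻¹ • (x + -x) = (0 : X) := by module
    rw [e, hf0] at h
    have hz : f x + f (-x) = 0 := by
      rcases smul_eq_zero.mp h.symm with h' | h'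
      · norm_num at h'
      · exact h'
    exact eq_neg_of_add_eq_zero_left (by rw [add_comm]; exact hz)
  intro x y
  by_cases hxy : x = y
  · subst hxy
    by_cases hx : x = 0
    · simp [hx, hf0]
    have h := hmid 0 (x + x) (fun h0 => double_ne x hx h0.symm)
    have e : (2 : ℝ)⁻¹ • (0 + (x + x)) = x := by module
    rw [e, hf0, zero_add] at h
    rw [h]
    module
  · by_cases hs : x + y = 0
    · have hyx : y = -x := eq_neg_of_add_eq_zero_right hs
      rw [hs, hf0, hyx, odd x]
      simp
    · have h1 := hmid x y hxy
      have h2 := hmid 0 (x + y) (fun h0 => hs h0.symm)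
      rw [zero_add, hf0, zero_add] at h2
      have h3 : (2 : ℝ)⁻¹ • f (x + y) = (2 : ℝ)⁻¹ • (f x + f y) := h2.symm.trans h1
      exact smul_right_injective Y (by norm_num : (2:ℝ)⁻¹ ≠ 0) h3

private lemma midpoint_of_additive (f : X → Y)
    (hadd : ∀ x y : X, f (x + y) = f x + f y) :
    ∀ x₀ x₁ : X, f ((2 : ℝ)⁻¹ • (x₀ + x₁)) = (2 : ℝ)⁻¹ • (f x₀ + f x₁) := by
  intro x₀ x₁
  have hF : f x₀ + f x₁ = f (x₀ + x₁) := (hadd x₀ x₁).symm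
  have h1 : f (x₀ + x₁) =
      f ((2 : ℝ)⁻¹ • (x₀ + x₁)) + f ((2 : ℝ)⁻¹ • (x₀ + x₁)) := by
    rw [← hadd]
    congr 1
    module
  rw [hF, h1]
  module

private lemma barycenter_of_additive (f : X → Y)
    (hadd : ∀ x y : X, f (x + y) = f x + f y) :
    ∀ x₀ x₁ x₂ : X,
      f ((3 : ℝ)⁻¹ • (x₀ + x₁ + x₂)) = (3 : ℝ)⁻¹ • (f x₀ + f x₁ + f x₂) := by
  intro x₀ x₁ x₂
  have hF : f x₀ + f x₁ + f x₂ = f (x₀ + x₁ + x₂) := by rw [hadd, hadd]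
  have h1 : f (x₀ + x₁ + x₂) =
      f ((3 : ℝ)⁻¹ • (x₀ + x₁ + x₂)) + f ((3 : ℝ)⁻¹ • (x₀ + x₁ + x₂))
        + f ((3 : ℝ)⁻¹ • (x₀ + x₁ + x₂)) := by
    rw [← hadd, ← hadd]
    congr 1
    module
  rw [hF, h1]
  module

end AuxNIso

/-- for an `n`-isometry `f` between real linear `n`-normed
spaces with `f 0 = 0`, additivity, midpoint preservation, and barycenter
preservation are equivalent. -/
theorem real_nisometry_additive_iff_midpoint_iff_barycenter {X Y : Type*}
    [AddCommGroup X] [Module ℝ X] [AddCommGroup Y] [Module ℝ Y] {n : ℕ}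
    (hn : 2 ≤ n) (NX : (Fin n → X) → ℝ) (NY : (Fin n → Y) → ℝ)
    (hNX : IsLinearNNorm X NX) (hNY : IsLinearNNorm Y NY)
    (hdX : (n : Cardinal) ≤ Module.rank ℝ X)
    (hdY : (n : Cardinal) ≤ Module.rank ℝ Y)
    (f : X → Y) (hf : IsNIsometryReal NX NY f) (hf0 : f 0 = 0) :
    ((∀ x₀ x₁ : X, f (x₀ + x₁) = f x₀ + f x₁) ↔
      (∀ x₀ x₁ : X, x₀ ≠ x₁ →
        f ((2 : ℝ)⁻¹ • (x₀ + x₁)) = (2 : ℝ)⁻¹ • (f x₀ + f x₁))) ∧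
    ((∀ x₀ x₁ : X, x₀ ≠ x₁ →
        f ((2 : ℝ)⁻¹ • (x₀ + x₁)) = (2 : ℝ)⁻¹ • (f x₀ + f x₁)) ↔
      (∀ x₀ x₁ x₂ : X, ¬ Collinear2Real x₀ x₁ x₂ →
        f ((3 : ℝ)⁻¹ • (x₀ + x₁ + x₂)) = (3 : ℝ)⁻¹ • (f x₀ + f x₁ + f x₂))) := by
  constructor
  · constructor
    · intro hadd x₀ x₁ _
      exact midpoint_of_additive f hadd x₀ x₁
    · intro hmid x₀ x₁
      exact additive_of_midpoint f hf0 hmid x₀ x₁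
  · constructor
    · intro hmid x₀ x₁ x₂ _
      exact barycenter_of_additive f (additive_of_midpoint f hf0 hmid) x₀ x₁ x₂
    · intro hbar x₀ x₁ _
      exact midpoint_of_additive f (additive_of_barycenter hn hdX f hf0 hbar) x₀ x₁
end
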